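/- For every complex number a and every strict partition λ = (λ₁ > λ₂ > … > λ_ℓ > 0): Σ over addable cells (i,j) of S(λ) of w(i,j) minus Σ over removable cells (i,j) of S(λ) of w(i,j) equals 2|λ| + a/2, where w(i,j) := ε(i,j) · ((j−i+1)(j−i) + a)/2 with ε(i,j) = 1 if i = j and ε(i,j) = 2 if j > i, and |λ| = λ₁ + ⋯ + λ_ℓ. (This is the identity expressing that on the Schur graph with UD-self-dual multiplicities κ_S = 1 on edges that change the number of rows and κ_S = √2 on edges that do not, the function 𝗊_a(i,j)² = ((j−i+1)(j−i)+a)/2 satisfies the Kerov condition with parameter t = a/2.) -/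

import Mathlib

open scoped BigOperators

namespace KerovSchur

/-- A strict partition: a strictly decreasing list of positive integers. -/
def IsStrictPartition (l : List ℕ) : Prop :=
  (∀ x ∈ l, 0 < x) ∧ l.Pairwise (· > ·)

/-- The shifted Young diagram `S(λ) = {(i,j) : 1 ≤ i ≤ ℓ, i ≤ j ≤ λ_i + i − 1}`
(cells indexed from `1`). -/
def ShiftedDiagram (l : List ℕ) : Set (ℕ × ℕ) :=
  {c | 1 ≤ c.1 ∧ c.1 ≤ l.length ∧ c.1 ≤ c.2 ∧ c.2 ≤ l.getD (c.1 - 1) 0 + c.1 - 1}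

/-- A cell `(i,j)` with `j ≥ i` is addable for the strict partition `λ` if it is not in
`S(λ)` and `S(λ) ∪ {(i,j)}` is the shifted diagram of a strict partition. -/
def ShiftedAddable (l : List ℕ) (c : ℕ × ℕ) : Prop :=
  c.1 ≤ c.2 ∧ c ∉ ShiftedDiagram l ∧
    ∃ m : List ℕ, IsStrictPartition m ∧ ShiftedDiagram m = insert c (ShiftedDiagram l)

/-- A cell is removable for the strict partition `λ` if it is in `S(λ)` and
`S(λ) ∖ {(i,j)}` is the shifted diagram of a strict partition. -/
def ShiftedRemovable (l : List ℕ) (c : ℕ × ℕ) : Prop :=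
  c ∈ ShiftedDiagram l ∧
    ∃ m : List ℕ, IsStrictPartition m ∧ ShiftedDiagram m = ShiftedDiagram l \ {c}

/-- The weight `w(i,j) = ε(i,j) ((j−i+1)(j−i) + a)/2`, with `ε = 1` on the diagonal and
`ε = 2` off the diagonal. -/
noncomputable def schurWeight (a : ℂ) (c : ℕ × ℕ) : ℂ :=
  (if c.1 = c.2 then 1 else 2) * ((((c.2 : ℂ) - (c.1 : ℂ) + 1) * ((c.2 : ℂ) - (c.1 : ℂ)) + a) / 2)

/-! ### entries -/

/-- Entry accessor (0-indexed), 0 beyond the end. -/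
def ent (l : List ℕ) (k : ℕ) : ℕ := l.getD k 0

lemma ent_eq_getElem (l : List ℕ) (k : ℕ) (h : k < l.length) : ent l k = l[k] := by
  simp [ent, List.getD_eq_getElem?_getD, List.getElem?_eq_getElem h]

lemma ent_eq_zero (l : List ℕ) (k : ℕ) (h : l.length ≤ k) : ent l k = 0 := by
  simp [ent, List.getD_eq_getElem?_getD, List.getElem?_eq_none h]

lemma mem_diagram {l : List ℕ} {c : ℕ × ℕ} :
    c ∈ ShiftedDiagram l ↔
      1 ≤ c.1 ∧ c.1 ≤ l.length ∧ c.1 ≤ c.2 ∧ c.2 < ent l (c.1 - 1) + c.1 := by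
  change (1 ≤ c.1 ∧ c.1 ≤ l.length ∧ c.1 ≤ c.2 ∧ c.2 ≤ l.getD (c.1 - 1) 0 + c.1 - 1) ↔ _
  rw [show l.getD (c.1-1) 0 = ent l (c.1-1) from rfl]
  omega

lemma IsStrictPartition.ent_pos {l : List ℕ} (hl : IsStrictPartition l) {k : ℕ}
    (h : k < l.length) : 0 < ent l k := by
  rw [ent_eq_getElem l k h]; exact hl.1 _ (l.getElem_mem h)

lemma IsStrictPartition.ent_lt {l : List ℕ} (hl : IsStrictPartition l) {i j : ℕ}
    (hij : i < j) (hi : i < l.length) : ent l j < ent l i := by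
  rcases lt_or_ge j l.length with hj | hj
  · rw [ent_eq_getElem l i hi, ent_eq_getElem l j hj]
    exact List.pairwise_iff_getElem.mp hl.2 i j hi hj hij
  · rw [ent_eq_zero l j hj]; exact hl.ent_pos hi

lemma IsStrictPartition.ent_le {l : List ℕ} (hl : IsStrictPartition l) {i j : ℕ}
    (hij : i ≤ j) : ent l j ≤ ent l i := by
  rcases eq_or_lt_of_le hij with rfl | h
  · exact le_rfl
  rcases lt_or_ge i l.length with hi | hi
  · exact (hl.ent_lt h hi).le
  · rw [ent_eq_zero l i hi, ent_eq_zero l j (hi.trans hij)]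

lemma isStrictPartition_of_ent {m : List ℕ}
    (hpos : ∀ k, k < m.length → 0 < ent m k)
    (hanti : ∀ i j, i < j → j < m.length → ent m j < ent m i) : IsStrictPartition m := by
  constructor
  · intro x hx
    obtain ⟨k, hk, rfl⟩ := List.getElem_of_mem hx
    rw [← ent_eq_getElem m k hk]; exact hpos k hk
  · rw [List.pairwise_iff_getElem]
    intro i j hi hj hij
    have := hanti i j hij hj
    rwa [ent_eq_getElem m i (hij.trans hj), ent_eq_getElem m j hj] at this

lemma ent_set (l : List ℕ) (k v n : ℕ) :
    ent (l.set k v) n = if n = k ∧ k < l.length then v else ent l n := by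
  simp only [ent, List.getD_eq_getElem?_getD, List.getElem?_set]
  rcases eq_or_ne k n with rfl | h
  · by_cases h1 : k < l.length
    · simp [h1]
    · simp [h1, List.getElem?_eq_none (le_of_not_gt h1)]
  · simp [h, Ne.symm h]

lemma ent_append_one (l : List ℕ) (n : ℕ) :
    ent (l ++ [1]) n = if n = l.length then 1 else ent l n := by
  simp only [ent, List.getD_eq_getElem?_getD]
  rcases lt_trichotomy n l.length with h | rfl | h
  · rw [if_neg (by omega), List.getElem?_append_left h]
  · rw [if_pos rfl, List.getElem?_append_right le_rfl]
    simp
  · rw [if_neg (by omega), List.getElem?_append_right (by omega),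
      List.getElem?_eq_none (le_of_lt h), List.getElem?_eq_none (by simp; omega)]

lemma ent_take (l : List ℕ) (k n : ℕ) :
    ent (l.take k) n = if n < k then ent l n else 0 := by
  simp only [ent, List.getD_eq_getElem?_getD]
  split_ifs with h
  · rw [List.getElem?_take_of_lt h]
  · rw [List.getElem?_eq_none (by simp; omega)]
    rfl

/-! ### Explicit cells and conditions -/

def acell (l : List ℕ) (k : ℕ) : ℕ × ℕ := (k + 1, ent l k + k + 1)
def acond (l : List ℕ) (k : ℕ) : Prop := k = 0 ∨ ent l k + 1 < ent l (k - 1)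
def rcell (l : List ℕ) (k : ℕ) : ℕ × ℕ := (k + 1, ent l k + k)
def rcond (l : List ℕ) (k : ℕ) : Prop := k + 1 = l.length ∨ ent l (k + 1) + 1 < ent l k

lemma addable_of {l : List ℕ} (hl : IsStrictPartition l) {k : ℕ}
    (hk : k ≤ l.length) (hc : acond l k) : ShiftedAddable l (acell l k) := by
  refine ⟨by simp only [acell]; omega, ?_, ?_⟩
  · rw [mem_diagram]
    simp only [acell, Nat.add_sub_cancel]
    omega
  rcases lt_or_eq_of_le hk with hk' | hk'
  · -- lengthen row k
    have h1 : 0 < ent l k := hl.ent_pos hk'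
    refine ⟨l.set k (ent l k + 1), ?_, ?_⟩
    · apply isStrictPartition_of_ent
      · intro n hn
        rw [List.length_set] at hn
        rw [ent_set]
        split_ifs with h
        · omega
        · exact hl.ent_pos hn
      · intro i j hij hj
        rw [List.length_set] at hj
        rw [ent_set, ent_set]
        rcases eq_or_ne j k with hjk | hjk
        · rw [if_pos ⟨hjk, hk'⟩, if_neg (by omega)]
          have hk0 : k ≠ 0 := by omega
          have h2 : ent l k + 1 < ent l (k - 1) := by
            rcases hc with h | h
            · omega
            · exact h
          have h3 : ent l (k - 1) ≤ ent l i := hl.ent_le (by omega)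
          omega
        · rw [if_neg (by tauto)]
          rcases eq_or_ne i k with hik | hik
          · rw [if_pos ⟨hik, hk'⟩]
            have := hl.ent_lt (hik ▸ hij) hk'
            omega
          · rw [if_neg (by tauto)]
            exact hl.ent_lt hij (hij.trans_le (by omega))
    · ext ⟨i, j⟩
      rw [Set.mem_insert_iff, mem_diagram, mem_diagram, List.length_set, ent_set]
      simp only [acell, Prod.mk.injEq]
      rcases eq_or_ne (i - 1) k with h | h
      · rw [if_pos ⟨h, hk'⟩, h]
        omega
      · rw [if_neg (by tauto)]
        omega
  · -- new row of length 1
    subst hk'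
    have h0 : ent l l.length = 0 := ent_eq_zero l _ le_rfl
    refine ⟨l ++ [1], ?_, ?_⟩
    · apply isStrictPartition_of_ent
      · intro n hn
        rw [List.length_append, List.length_singleton] at hn
        rw [ent_append_one]
        split_ifs with h
        · omega
        · exact hl.ent_pos (by omega)
      · intro i j hij hj
        rw [List.length_append, List.length_singleton] at hj
        rw [ent_append_one, ent_append_one]
        rcases eq_or_ne j l.length with rfl | hjl
        · rw [if_pos rfl, if_neg (by omega)]
          have hk0 : l.length ≠ 0 := by omega
          have h2 : ent l l.length + 1 < ent l (l.length - 1) := by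
            rcases hc with h | h
            · omega
            · exact h
          have h3 : ent l (l.length - 1) ≤ ent l i := hl.ent_le (by omega)
          omega
        · rw [if_neg hjl, if_neg (by omega)]
          exact hl.ent_lt hij (by omega)
    · ext ⟨i, j⟩
      rw [Set.mem_insert_iff, mem_diagram, mem_diagram, List.length_append,
        List.length_singleton, ent_append_one]
      simp only [acell, Prod.mk.injEq, h0]
      rcases eq_or_ne (i - 1) l.length with h | h
      · rw [if_pos h, h]
        omega
      · rw [if_neg h]
        have : ent l (i - 1) = 0 ∨ i - 1 < l.length := by
          rcases lt_or_ge (i-1) l.length with h' | h'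
          · exact Or.inr h'
          · exact Or.inl (ent_eq_zero l _ h')
        omega


lemma removable_of {l : List ℕ} (hl : IsStrictPartition l) {k : ℕ}
    (hk : k < l.length) (hc : rcond l k) : ShiftedRemovable l (rcell l k) := by
  have h1 : 0 < ent l k := hl.ent_pos hk
  constructor
  · rw [mem_diagram]
    simp only [rcell, Nat.add_sub_cancel]
    omega
  rcases eq_or_lt_of_le (show 1 ≤ ent l k from h1) with h2 | h2
  · -- ent l k = 1 : delete last row, k + 1 = l.length
    have hkl : k + 1 = l.length := by
      rcases hc with h | h
      · exact h
      · omega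
    refine ⟨l.take k, ?_, ?_⟩
    · apply isStrictPartition_of_ent
      · intro n hn
        rw [List.length_take] at hn
        rw [ent_take, if_pos (by omega)]
        exact hl.ent_pos (by omega)
      · intro i j hij hj
        rw [List.length_take] at hj
        rw [ent_take, ent_take, if_pos (by omega), if_pos (by omega)]
        exact hl.ent_lt hij (by omega)
    · ext ⟨i, j⟩
      rw [Set.mem_diff, Set.mem_singleton_iff, mem_diagram, mem_diagram, List.length_take,
        ent_take]
      simp only [rcell, Prod.mk.injEq]
      rcases eq_or_ne (i - 1) k with h | h
      · rw [if_neg (by omega), h]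
        omega
      · split_ifs with h'
        · omega
        · -- i - 1 ≥ k, i - 1 ≠ k, so i ≥ k + 2 > l.length : both sides false
          have : l.length ≤ i - 1 := by omega
          have h3 : ent l (i - 1) = 0 := ent_eq_zero l _ this
          omega
  · -- ent l k ≥ 2 : shorten row k
    refine ⟨l.set k (ent l k - 1), ?_, ?_⟩
    · apply isStrictPartition_of_ent
      · intro n hn
        rw [List.length_set] at hn
        rw [ent_set]
        split_ifs with h
        · omega
        · exact hl.ent_pos hn
      · intro i j hij hj
        rw [List.length_set] at hj
        rw [ent_set, ent_set]
        rcases eq_or_ne j k with hjk | hjk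
        · rw [if_pos ⟨hjk, hk⟩, if_neg (by omega)]
          have h3 : ent l k ≤ ent l i := hl.ent_le (by omega)
          omega
        · rw [if_neg (by tauto)]
          rcases eq_or_ne i k with hik | hik
          · rw [if_pos ⟨hik, hk⟩]
            have h4 : ent l (k + 1) + 1 < ent l k := by
              rcases hc with h | h
              · have := ent_eq_zero l (k+1) (by omega)
                omega
              · exact h
            have h5 : ent l j ≤ ent l (k + 1) := hl.ent_le (by omega)
            omega
          · rw [if_neg (by tauto)]
            exact hl.ent_lt hij (hij.trans_le (by omega))
    · ext ⟨i, j⟩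
      rw [Set.mem_diff, Set.mem_singleton_iff, mem_diagram, mem_diagram, List.length_set,
        ent_set]
      simp only [rcell, Prod.mk.injEq]
      rcases eq_or_ne (i - 1) k with h | h
      · rw [if_pos ⟨h, hk⟩, h]
        omega
      · rw [if_neg (by tauto)]
        omega

lemma mem_diagram' {l : List ℕ} {i j : ℕ} :
    (i, j) ∈ ShiftedDiagram l ↔ 1 ≤ i ∧ i ≤ l.length ∧ i ≤ j ∧ j < ent l (i - 1) + i :=
  mem_diagram

lemma addable_iff {l : List ℕ} (hl : IsStrictPartition l) (c : ℕ × ℕ) :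
    ShiftedAddable l c ↔ ∃ k, k ≤ l.length ∧ acond l k ∧ c = acell l k := by
  constructor
  · rintro ⟨hij, hnot, m, hm, hE⟩
    obtain ⟨i, j⟩ := c
    simp only at hij
    have hcm : (i, j) ∈ ShiftedDiagram m := by rw [hE]; exact Set.mem_insert _ _
    rw [mem_diagram'] at hcm hnot
    obtain ⟨hi1, him, hijle, hjm⟩ := hcm
    have f1 : ∀ n, n < l.length → n + 1 ≤ m.length ∧ ent l n ≤ ent m n := by
      intro n hn
      have hmem : ((n+1 : ℕ), ent l n + n) ∈ ShiftedDiagram m := by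
        rw [hE]
        right
        rw [mem_diagram']
        have := hl.ent_pos hn
        simp only [Nat.add_sub_cancel]
        omega
      rw [mem_diagram'] at hmem
      simp only [Nat.add_sub_cancel] at hmem
      omega
    have f2 : ∀ n, n < m.length →
        (n + 1 = i ∧ ent m n + n = j) ∨ (n + 1 ≤ l.length ∧ ent m n ≤ ent l n) := by
      intro n hn
      have hmem : ((n+1 : ℕ), ent m n + n) ∈ insert (i,j) (ShiftedDiagram l) := by
        rw [← hE, mem_diagram']
        have := hm.ent_pos hn
        simp only [Nat.add_sub_cancel]
        omega
      rcases Set.mem_insert_iff.mp hmem with h | h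
      · rw [Prod.mk.injEq] at h
        exact Or.inl h
      · rw [mem_diagram'] at h
        simp only [Nat.add_sub_cancel] at h
        exact Or.inr ⟨h.2.1, by omega⟩
    by_cases hi : i ≤ l.length
    · -- extend an existing row
      have hf1 := f1 (i-1) (by omega)
      have hf2 := f2 (i-1) (by omega)
      have hi1' : i - 1 + 1 = i := by omega
      rw [hi1'] at hf2
      have hj_ge : ent l (i-1) + i ≤ j := by omega
      have hj_eq' : ent m (i-1) + (i-1) = j := by
        rcases hf2 with ⟨_, h⟩ | ⟨_, h⟩
        · exact h
        · omega
      have hkey : ((i : ℕ), ent l (i-1) + i) ∈ insert (i,j) (ShiftedDiagram l) := by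
        rw [← hE, mem_diagram']
        omega
      rcases Set.mem_insert_iff.mp hkey with h | h
      · rw [Prod.mk.injEq] at h
        refine ⟨i - 1, by omega, ?_, ?_⟩
        · rcases eq_or_ne (i-1) 0 with h0 | h0
          · exact Or.inl h0
          · right
            have hf1' := f1 (i-1-1) (by omega)
            have hf2' := f2 (i-1-1) (by omega)
            have hrw : i - 1 - 1 + 1 = i - 1 := by omega
            rw [hrw] at hf2'
            have hent : ent m (i-1-1) = ent l (i-1-1) := by
              rcases hf2' with ⟨h', _⟩ | ⟨_, h'⟩ <;> omega
            have hlt := hm.ent_lt (show i-1-1 < i-1 by omega) (by omega)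
            omega
        · simp only [acell, Prod.mk.injEq]
          omega
      · rw [mem_diagram'] at h
        omega
    · -- new row
      push_neg at hi
      have hf2 := f2 (i-1) (by omega)
      have hi1' : i - 1 + 1 = i := by omega
      rw [hi1'] at hf2
      have hj_eq : ent m (i-1) + (i-1) = j := by
        rcases hf2 with ⟨_, h⟩ | ⟨h, _⟩
        · exact h
        · omega
      have hii : ((i:ℕ), i) ∈ insert (i,j) (ShiftedDiagram l) := by
        rw [← hE, mem_diagram']
        have := hm.ent_pos (show i-1 < m.length by omega)
        omega
      have hji : j = i := by
        rcases Set.mem_insert_iff.mp hii with h | h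
        · rw [Prod.mk.injEq] at h
          omega
        · rw [mem_diagram'] at h
          omega
      have hile : i = l.length + 1 := by
        by_contra hne
        have hf2' := f2 (i-2) (by omega)
        rcases hf2' with ⟨h', _⟩ | ⟨h', _⟩ <;> omega
      have hz : ent l l.length = 0 := ent_eq_zero l _ le_rfl
      have hrw : i - 1 = l.length := by omega
      rw [hrw] at hj_eq
      refine ⟨l.length, le_rfl, ?_, ?_⟩
      · rcases eq_or_ne l.length 0 with h0 | h0
        · exact Or.inl h0
        right
        have hf1' := f1 (l.length - 1) (by omega)
        have hf2' := f2 (l.length - 1) (by omega)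
        have hll : l.length - 1 + 1 = l.length := by omega
        rw [hll] at hf2'
        have hentm : ent m (l.length - 1) = ent l (l.length - 1) := by
          rcases hf2' with ⟨h', _⟩ | ⟨_, h'⟩ <;> omega
        have hlt := hm.ent_lt (show l.length - 1 < l.length by omega) (by omega)
        omega
      · simp only [acell, Prod.mk.injEq]
        omega
  · rintro ⟨k, hk, hc, rfl⟩
    exact addable_of hl hk hc


lemma removable_iff {l : List ℕ} (hl : IsStrictPartition l) (c : ℕ × ℕ) :
    ShiftedRemovable l c ↔ ∃ k, k < l.length ∧ rcond l k ∧ c = rcell l k := by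
  constructor
  · rintro ⟨hcmem, m, hm, hE⟩
    obtain ⟨i, j⟩ := c
    rw [mem_diagram'] at hcmem
    obtain ⟨hi1, hil, hijle, hjl⟩ := hcmem
    have hpos := hl.ent_pos (show i - 1 < l.length by omega)
    have hi1' : i - 1 + 1 = i := by omega
    have g1 : ∀ n, n < l.length → ¬(n + 1 = i ∧ ent l n + n = j) →
        n + 1 ≤ m.length ∧ ent l n ≤ ent m n := by
      intro n hn hne
      have hmem : ((n+1 : ℕ), ent l n + n) ∈ ShiftedDiagram m := by
        rw [hE]
        refine ⟨?_, ?_⟩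
        · rw [mem_diagram']
          have := hl.ent_pos hn
          simp only [Nat.add_sub_cancel]
          omega
        · simp only [Set.mem_singleton_iff, Prod.mk.injEq]
          tauto
      rw [mem_diagram'] at hmem
      simp only [Nat.add_sub_cancel] at hmem
      omega
    have g2 : ∀ n, n < m.length →
        n + 1 ≤ l.length ∧ ent m n ≤ ent l n ∧ ¬(n + 1 = i ∧ ent m n + n = j) := by
      intro n hn
      have hmem : ((n+1 : ℕ), ent m n + n) ∈ ShiftedDiagram l \ {(i, j)} := by
        rw [← hE, mem_diagram']
        have := hm.ent_pos hn
        simp only [Nat.add_sub_cancel]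
        omega
      obtain ⟨h1, h2⟩ := hmem
      rw [mem_diagram'] at h1
      simp only [Nat.add_sub_cancel] at h1
      simp only [Set.mem_singleton_iff, Prod.mk.injEq] at h2
      exact ⟨h1.2.1, by omega, by tauto⟩
    rcases eq_or_lt_of_le (show 1 ≤ ent l (i - 1) from hpos) with h2 | h2
    · -- row of length 1 is removed, so i = l.length and j = i
      have hji : j = i := by omega
      have hiL : i = l.length := by
        by_contra hne
        have hg1 := g1 (l.length - 1) (by omega) (by omega)
        have hg2 := g2 (i-1) (by omega)
        rw [hi1'] at hg2
        have := hm.ent_pos (show i - 1 < m.length by omega)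
        omega
      refine ⟨i - 1, by omega, Or.inl (by omega), ?_⟩
      simp only [rcell, Prod.mk.injEq]
      omega
    · -- row i is shortened
      have him : i ≤ m.length := by
        rcases eq_or_ne j i with h | h
        · have hmem : ((i : ℕ), i + 1) ∈ ShiftedDiagram m := by
            rw [hE]
            constructor
            · rw [mem_diagram']
              omega
            · simp only [Set.mem_singleton_iff, Prod.mk.injEq]
              omega
          rw [mem_diagram'] at hmem
          omega
        · have hmem : ((i : ℕ), i) ∈ ShiftedDiagram m := by
            rw [hE]
            constructor
            · rw [mem_diagram']
              omega
            · simp only [Set.mem_singleton_iff, Prod.mk.injEq]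
              omega
          rw [mem_diagram'] at hmem
          omega
      have hg2 := g2 (i-1) (by omega)
      rw [hi1'] at hg2
      obtain ⟨-, hle, hne⟩ := hg2
      have hj : j = ent l (i-1) + (i-1) := by
        by_contra hne'
        have hmem : ((i : ℕ), ent l (i-1) + (i-1)) ∈ ShiftedDiagram m := by
          rw [hE]
          constructor
          · rw [mem_diagram']
            omega
          · simp only [Set.mem_singleton_iff, Prod.mk.injEq]
            omega
        rw [mem_diagram'] at hmem
        have hmm : ent m (i-1) = ent l (i-1) := by omega
        have hcm : ((i : ℕ), j) ∈ ShiftedDiagram m := by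
          rw [mem_diagram']
          omega
        rw [hE] at hcm
        exact hcm.2 rfl
      have hmu : ent m (i-1) = ent l (i-1) - 1 := by
        have hmem : ((i : ℕ), ent l (i-1) + (i-1) - 1) ∈ ShiftedDiagram m := by
          rw [hE]
          constructor
          · rw [mem_diagram']
            omega
          · simp only [Set.mem_singleton_iff, Prod.mk.injEq]
            omega
        rw [mem_diagram'] at hmem
        omega
      refine ⟨i - 1, by omega, ?_, ?_⟩
      · rcases eq_or_ne i l.length with h | h
        · exact Or.inl (by omega)
        · right
          rw [hi1']
          have hg1 := g1 i (by omega) (by omega)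
          have hlt := hm.ent_lt (show i - 1 < i by omega) (by omega)
          omega
      · simp only [rcell, Prod.mk.injEq]
        omega
  · rintro ⟨k, hk, hc, rfl⟩
    exact removable_of hl hk hc


/-! ### Sums -/

lemma tsum_eq_sum_finset {P : ℕ × ℕ → Prop} {s : Finset (ℕ × ℕ)}
    (h : ∀ c, P c ↔ c ∈ s) (f : ℕ × ℕ → ℂ) :
    ∑' c : {c : ℕ × ℕ // P c}, f c.1 = ∑ c ∈ s, f c := by
  rw [← Finset.tsum_subtype s f]
  exact (Equiv.subtypeEquivRight h).tsum_eq (fun c => f c.1)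

noncomputable def Fq (a : ℂ) (n : ℕ) : ℂ := (((n : ℂ) + 1) * n + a) / 2

lemma Fq_zero (a : ℂ) : Fq a 0 = a / 2 := by
  simp [Fq]

lemma Fq_succ (a : ℂ) (n : ℕ) : Fq a (n + 1) = Fq a n + (n + 1) := by
  simp only [Fq]
  push_cast
  ring

lemma weight_acell (a : ℂ) (l : List ℕ) (k : ℕ) :
    schurWeight a (acell l k) = (if ent l k = 0 then 1 else 2) * Fq a (ent l k) := by
  simp only [schurWeight, acell, Fq]
  rcases eq_or_ne (ent l k) 0 with h | h
  · simp only [h, Nat.zero_add, Nat.cast_zero, if_true, eq_self_iff_true]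
    push_cast
    ring
  · rw [if_neg h]
    simp only [show ¬(k + 1 = ent l k + k + 1) by omega, if_false]
    push_cast
    ring

lemma weight_rcell (a : ℂ) (l : List ℕ) (k : ℕ) (h1 : 1 ≤ ent l k) :
    schurWeight a (rcell l k) = (if ent l k = 1 then 1 else 2) * Fq a (ent l k - 1) := by
  obtain ⟨d, hd⟩ : ∃ d, ent l k = d + 1 := ⟨ent l k - 1, by omega⟩
  simp only [schurWeight, rcell, Fq, hd, Nat.add_sub_cancel]
  rcases eq_or_ne d 0 with rfl | h
  · rw [if_pos (by omega), if_pos rfl]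
    push_cast
    ring
  · rw [if_neg (by omega), if_neg (by omega)]
    push_cast
    ring

lemma sum_ent (l : List ℕ) : ∑ k ∈ Finset.range l.length, ent l k = l.sum := by
  induction l with
  | nil => simp
  | cons x t ih =>
    rw [List.length_cons, Finset.sum_range_succ', List.sum_cons]
    have h0 : ent (x :: t) 0 = x := rfl
    have hs : ∀ k, ent (x :: t) (k + 1) = ent t k := fun k => rfl
    simp only [h0, hs, ih]
    omega

lemma key (a : ℂ) (l : List ℕ) (hl : IsStrictPartition l) (k : ℕ) (hk : k < l.length)
    [Decidable (acond l (k + 1))] [Decidable (rcond l k)] [Decidable (k + 1 = l.length)] :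
    (if acond l (k + 1) then schurWeight a (acell l (k + 1)) else 0) -
      (if rcond l k then schurWeight a (rcell l k) else 0)
    = 2 * Fq a (ent l (k + 1)) - 2 * Fq a (ent l k) + 2 * (ent l k : ℂ) -
      (if k + 1 = l.length then a / 2 else 0) := by
  have hx1 : 1 ≤ ent l k := hl.ent_pos hk
  have hxy : ent l (k + 1) < ent l k := hl.ent_lt (by omega) hk
  obtain ⟨d, hd⟩ : ∃ d, ent l k = d + 1 := ⟨ent l k - 1, by omega⟩
  have hacond : acond l (k + 1) ↔ ent l (k + 1) + 1 < ent l k := by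
    simp only [acond, Nat.add_sub_cancel]
    omega
  have hrcond : rcond l k ↔ (k + 1 = l.length ∨ ent l (k + 1) + 1 < ent l k) := Iff.rfl
  rw [weight_acell, weight_rcell a l k hx1]
  by_cases hC : ent l (k + 1) + 1 < ent l k
  · rw [if_pos (hacond.mpr hC), if_pos (hrcond.mpr (Or.inr hC))]
    by_cases hD : k + 1 = l.length
    · have hy : ent l (k + 1) = 0 := ent_eq_zero l _ (by omega)
      rw [if_pos hD, hy, hd, if_pos rfl, if_neg (by omega), Nat.add_sub_cancel,
        Fq_zero, Fq_succ]
      push_cast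
      ring
    · have hy : 1 ≤ ent l (k + 1) := hl.ent_pos (by omega)
      rw [if_neg hD, if_neg (by omega), if_neg (by omega), hd, Nat.add_sub_cancel, Fq_succ]
      push_cast
      ring
  · have hxy1 : ent l k = ent l (k + 1) + 1 := by omega
    rw [if_neg (by rw [hacond]; exact hC)]
    by_cases hD : k + 1 = l.length
    · have hy : ent l (k + 1) = 0 := ent_eq_zero l _ (by omega)
      have hx : ent l k = 1 := by omega
      rw [if_pos hD, if_pos (hrcond.mpr (Or.inl hD)), if_pos hx, hx, hy, Fq_zero]
      have h1 : Fq a 1 = Fq a 0 + 1 := by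
        rw [Fq_succ]
        norm_num
      rw [h1, Fq_zero]
      push_cast
      ring
    · rw [if_neg hD, if_neg (by rw [hrcond]; tauto)]
      rw [hxy1, Fq_succ]
      push_cast
      ring

/-- for every `a ∈ ℂ` and every strict partition `λ`,
`Σ_{addable (i,j)} w(i,j) − Σ_{removable (i,j)} w(i,j) = 2|λ| + a/2`. -/
theorem statement19 (a : ℂ) (l : List ℕ) (hl : IsStrictPartition l) :
    (∑' c : {c : ℕ × ℕ // ShiftedAddable l c}, schurWeight a c.1) -
      (∑' c : {c : ℕ × ℕ // ShiftedRemovable l c}, schurWeight a c.1)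
    = 2 * (l.sum : ℂ) + a / 2 := by
  classical
  have hA : ∀ c, ShiftedAddable l c ↔
      c ∈ ((Finset.range (l.length + 1)).filter (fun k => acond l k)).image (acell l) := by
    intro c
    rw [addable_iff hl]
    simp only [Finset.mem_image, Finset.mem_filter, Finset.mem_range, Nat.lt_succ_iff]
    constructor
    · rintro ⟨k, h1, h2, rfl⟩; exact ⟨k, ⟨h1, h2⟩, rfl⟩
    · rintro ⟨k, ⟨h1, h2⟩, rfl⟩; exact ⟨k, h1, h2, rfl⟩
  have hR : ∀ c, ShiftedRemovable l c ↔
      c ∈ ((Finset.range l.length).filter (fun k => rcond l k)).image (rcell l) := by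
    intro c
    rw [removable_iff hl]
    simp only [Finset.mem_image, Finset.mem_filter, Finset.mem_range]
    constructor
    · rintro ⟨k, h1, h2, rfl⟩; exact ⟨k, ⟨h1, h2⟩, rfl⟩
    · rintro ⟨k, ⟨h1, h2⟩, rfl⟩; exact ⟨k, h1, h2, rfl⟩
  rw [tsum_eq_sum_finset hA (schurWeight a), tsum_eq_sum_finset hR (schurWeight a),
    Finset.sum_image (by
      intro x hx y hy hxy
      have := congrArg Prod.fst hxy
      simp only [acell] at this
      omega),
    Finset.sum_image (by
      intro x hx y hy hxy
      have := congrArg Prod.fst hxy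
      simp only [rcell] at this
      omega),
    Finset.sum_filter, Finset.sum_filter]
  rcases Nat.eq_zero_or_pos l.length with hL | hL
  · have hnil : l = [] := List.length_eq_zero_iff.mp hL
    subst hnil
    simp only [List.length_nil, Nat.zero_add, Finset.range_one, Finset.range_zero,
      Finset.sum_empty, Finset.sum_singleton, sub_zero, List.sum_nil, Nat.cast_zero]
    have h0 : acond [] 0 := Or.inl rfl
    rw [if_pos h0]
    norm_num [schurWeight, acell, ent]
  · rw [Finset.sum_range_succ']
    have h0 : acond l 0 := Or.inl rfl
    rw [if_pos h0, weight_acell,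
      if_neg (by have := hl.ent_pos hL; omega)]
    have hkey : ∀ k ∈ Finset.range l.length,
        (if acond l (k + 1) then schurWeight a (acell l (k + 1)) else 0) -
          (if rcond l k then schurWeight a (rcell l k) else 0)
        = 2 * Fq a (ent l (k + 1)) - 2 * Fq a (ent l k) + 2 * (ent l k : ℂ) -
          (if k = l.length - 1 then a / 2 else 0) := by
      intro k hk
      rw [Finset.mem_range] at hk
      rw [key a l hl k hk]
      congr 1
      by_cases h : k + 1 = l.length
      · rw [if_pos h, if_pos (by omega)]
      · rw [if_neg h, if_neg (by omega)]
    rw [add_sub_right_comm, ← Finset.sum_sub_distrib, Finset.sum_congr rfl hkey]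
    have e1 : ∑ k ∈ Finset.range l.length,
        (2 * Fq a (ent l (k + 1)) - 2 * Fq a (ent l k) + 2 * (ent l k : ℂ) -
          (if k = l.length - 1 then a / 2 else 0))
        = (∑ k ∈ Finset.range l.length,
            (2 * Fq a (ent l (k + 1)) - 2 * Fq a (ent l k)))
          + (∑ k ∈ Finset.range l.length, 2 * (ent l k : ℂ))
          - ∑ k ∈ Finset.range l.length, (if k = l.length - 1 then a / 2 else 0) := by
      rw [← Finset.sum_add_distrib, ← Finset.sum_sub_distrib]
    rw [e1, Finset.sum_range_sub (fun k => 2 * Fq a (ent l k)),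
      ent_eq_zero l l.length le_rfl, Fq_zero,
      Finset.sum_ite_eq' (Finset.range l.length) (l.length - 1) (fun _ => a / 2),
      if_pos (Finset.mem_range.mpr (by omega)), ← Finset.mul_sum,
      show ∑ k ∈ Finset.range l.length, (ent l k : ℂ) = ((l.sum : ℕ) : ℂ) by
        rw [← sum_ent l]
        push_cast
        rfl]
    ring

end KerovSchur
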